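/- arXiv:1404.0783 — 3 statements merged into one kernel-verified Lean document; each statement's English description precedes it below -/
import Mathlib

section
/- An E3-SAT instance with n variables and m clauses is satisfiable if and only if the corresponding MWTM instance (constructed via the standard reduction with n + m tasks and 0/1 weights) admits a feasible assignment of total weight n + m. -/
/-- Nodes of the tree in the E3-SAT → MWTM reduction: the root, two variable
nodes per variable (`var i true` for `x_i`, `var i false` for `¬x_i`), and a
literal node `lit p q` for the `q`-th literal occurrence of clause `C_p`. -/
inductive RNode (n m : ℕ) : Type where
  | root : RNode n m
  | var : Fin n → Bool → RNode n m
  | lit : Fin m → Fin 3 → RNode n m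
  deriving DecidableEq

/-- `C p q` is the `q`-th literal of clause `p`: a variable and a sign
(`true` for the positive literal `x_i`, `false` for `¬x_i`). -/
def parentR {n m : ℕ} (C : Fin m → Fin 3 → Fin n × Bool) :
    RNode n m → RNode n m
  | .root => .root
  | .var _ _ => .root
  | .lit p q => .var (C p q).1 (C p q).2

/-- A leaf: a node with no children. -/
def IsLeafR {n m : ℕ} (C : Fin m → Fin 3 → Fin n × Bool) (v : RNode n m) :
    Prop := ∀ u : RNode n m, parentR C u = v → u = v

/-- Weak ancestor relation in the reduction tree. -/
def AncR {n m : ℕ} (C : Fin m → Fin 3 → Fin n × Bool)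
    (u v : RNode n m) : Prop :=
  u = v ∨ u = RNode.root ∨
    ∃ p q, v = RNode.lit p q ∧ u = RNode.var (C p q).1 (C p q).2

/-- The 0/1 weights of the reduction: a variable node gets weight 1 only on
its enforcement task, a literal node gets weight 1 only on the clausal task
of its clause. Tasks are `Sum.inl p` (clausal) and `Sum.inr i` (enforcement). -/
def wR {n m : ℕ} : RNode n m → (Fin m ⊕ Fin n) → ℕ
  | .var i _, .inr i' => if i = i' then 1 else 0
  | .lit p _, .inl p' => if p = p' then 1 else 0
  | _, _ => 0

/-- A feasible assignment: an injection from the `n + m` tasks to nodes whose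
image is an antichain w.r.t. the ancestor relation. -/
def FeasibleR {n m : ℕ} (C : Fin m → Fin 3 → Fin n × Bool)
    (f : (Fin m ⊕ Fin n) → RNode n m) : Prop :=
  Function.Injective f ∧
    ∀ t₁ t₂ : Fin m ⊕ Fin n, t₁ ≠ t₂ → ¬ AncR C (f t₁) (f t₂)

/-- Satisfiability of the E3-SAT instance `C`. -/
def SatisfiableC {n m : ℕ} (C : Fin m → Fin 3 → Fin n × Bool) : Prop :=
  ∃ a : Fin n → Bool, ∀ p : Fin m, ∃ q : Fin 3, a (C p q).1 = (C p q).2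

/-- An E3-SAT instance with `n` variables and `m` clauses is
satisfiable iff the reduced MWTM instance admits a feasible assignment of
total weight `n + m`. -/
theorem e3sat_iff_mwtm (n m : ℕ) (C : Fin m → Fin 3 → Fin n × Bool) :
    SatisfiableC C ↔
      ∃ f : (Fin m ⊕ Fin n) → RNode n m, FeasibleR C f ∧
        ∑ t : Fin m ⊕ Fin n, wR (f t) t = n + m := by
  constructor
  · rintro ⟨a, ha⟩
    choose q hq using ha
    refine ⟨fun t => match t with
      | .inl p => .lit p (q p)
      | .inr i => .var i (!(a i)), ⟨?_, ?_⟩, ?_⟩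
    · rintro (p|i) (p'|i') h <;> simp_all
    · rintro (p|i) (p'|i') hne hanc <;>
        rcases hanc with h | h | ⟨p₀, q₀, h1, h2⟩ <;> simp_all
      · -- var ancestor of lit: contradiction with satisfying literal
        obtain ⟨h3, h4⟩ := h2
        obtain ⟨h11, h12⟩ := h1
        subst h11; subst h12
        rw [h3, hq p'] at h4
        simp at h4
    · rw [Fintype.sum_sum_type]
      simp [wR]
      omega
  · rintro ⟨f, ⟨hinj, hanti⟩, hsum⟩
    have hle : ∀ t : Fin m ⊕ Fin n, wR (f t) t ≤ 1 := by
      intro t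
      cases h : f t <;> cases t <;> simp [wR] <;> split <;> simp
    have hone : ∀ t : Fin m ⊕ Fin n, wR (f t) t = 1 := by
      have hcard : ∑ t : Fin m ⊕ Fin n, (1:ℕ) = n + m := by
        simp [Nat.add_comm]
      have := (Finset.sum_eq_sum_iff_of_le (f := fun t => wR (f t) t)
        (g := fun _ => (1:ℕ)) (fun t _ => hle t)).1 (by rw [hsum, hcard])
      intro t; exact this t (Finset.mem_univ t)
    have hvar : ∀ i : Fin n, ∃ b, f (Sum.inr i) = RNode.var i b := by
      intro i
      have h1 := hone (Sum.inr i)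
      cases h : f (Sum.inr i) with
      | root => rw [h] at h1; simp [wR] at h1
      | var i' b =>
          rw [h] at h1; simp only [wR] at h1
          split at h1
          · next heq => subst heq; exact ⟨b, rfl⟩
          · simp at h1
      | lit p' q' => rw [h] at h1; simp [wR] at h1
    have hlit : ∀ p : Fin m, ∃ q, f (Sum.inl p) = RNode.lit p q := by
      intro p
      have h1 := hone (Sum.inl p)
      cases h : f (Sum.inl p) with
      | root => rw [h] at h1; simp [wR] at h1
      | var i' b => rw [h] at h1; simp [wR] at h1
      | lit p' q' =>
          rw [h] at h1; simp only [wR] at h1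
          split at h1
          · next heq => subst heq; exact ⟨q', rfl⟩
          · simp at h1
    choose b hb using hvar
    choose q hq using hlit
    refine ⟨fun i => !(b i), fun p => ⟨q p, ?_⟩⟩
    set i := (C p (q p)).1 with hi
    have hne : (Sum.inr i : Fin m ⊕ Fin n) ≠ Sum.inl p := by simp
    have hA := hanti (Sum.inr i) (Sum.inl p) hne
    rw [hb i, hq p] at hA
    have hbne : b i ≠ (C p (q p)).2 := by
      intro hbe
      exact hA (Or.inr (Or.inr ⟨p, q p, rfl, by rw [hbe, hi]⟩))
    cases hbe : b i <;> cases hce : (C p (q p)).2 <;> simp_all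
end

section
/- In a weight-(n+m) solution to the reduced MWTM instance, for each variable x_i exactly one of the nodes 2i (x_i) and 2i+1 (¬x_i) receives the enforcement task m+i, and every clausal task assigned to a literal node must use a literal node that is a child of the unassigned variable node's sibling side, i.e., no clausal task is assigned to a literal node whose parent variable node is assigned; hence the induced truth assignment (x_i true iff node 2i+1 carries task m+i) satisfies every clause. -/
/-- In a weight-`(n+m)` solution of the reduced MWTM instance,
each enforcement task is carried by exactly one of the two variable nodes of
its variable; no clausal task is assigned to a literal node whose parent
variable node is assigned; hence the induced truth assignment (`x_i` true iff
the node for `¬x_i` carries task `m+i`) satisfies every clause. -/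
theorem mwtm_solution_satisfies (n m : ℕ) (C : Fin m → Fin 3 → Fin n × Bool)
    (f : (Fin m ⊕ Fin n) → RNode n m) (hf : FeasibleR C f)
    (hw : ∑ t : Fin m ⊕ Fin n, wR (f t) t = n + m) :
    (∀ i : Fin n, ∃! b : Bool, f (Sum.inr i) = RNode.var i b) ∧
      (∀ (p : Fin m) (q : Fin 3), f (Sum.inl p) = RNode.lit p q →
        f (Sum.inr (C p q).1) ≠ RNode.var (C p q).1 (C p q).2) ∧
      (∀ p : Fin m, ∃ q : Fin 3,
        (fun i : Fin n => decide (f (Sum.inr i) = RNode.var i false))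
            (C p q).1 = (C p q).2) := by
  -- each term is at most 1
  have hle : ∀ t : Fin m ⊕ Fin n, wR (f t) t ≤ 1 := by
    intro t
    cases h : f t with
    | root => cases t <;> simp [wR]
    | var i b => cases t <;> simp [wR] <;> split <;> simp
    | lit p q => cases t <;> simp [wR] <;> split <;> simp
  have hone : ∀ t : Fin m ⊕ Fin n, wR (f t) t = 1 := by
    intro t
    exact (Finset.sum_eq_sum_iff_of_le (s := Finset.univ) (g := fun _ => (1:ℕ))
      (fun t _ => hle t)).mp (by rw [hw]; simp; omega) t (Finset.mem_univ t)
  have hvar : ∀ i : Fin n, ∃ b, f (Sum.inr i) = RNode.var i b := by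
    intro i
    have h := hone (Sum.inr i)
    cases hf' : f (Sum.inr i) with
    | root => rw [hf'] at h; simp [wR] at h
    | var j b =>
      rw [hf'] at h; simp [wR] at h
      subst h; exact ⟨b, rfl⟩
    | lit p q => rw [hf'] at h; simp [wR] at h
  have hlit : ∀ p : Fin m, ∃ q, f (Sum.inl p) = RNode.lit p q := by
    intro p
    have h := hone (Sum.inl p)
    cases hf' : f (Sum.inl p) with
    | root => rw [hf'] at h; simp [wR] at h
    | var j b => rw [hf'] at h; simp [wR] at h
    | lit p' q =>
      rw [hf'] at h; simp [wR] at h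
      subst h; exact ⟨q, rfl⟩
  have part2 : ∀ (p : Fin m) (q : Fin 3), f (Sum.inl p) = RNode.lit p q →
      f (Sum.inr (C p q).1) ≠ RNode.var (C p q).1 (C p q).2 := by
    intro p q hpq hcontra
    exact hf.2 (Sum.inr (C p q).1) (Sum.inl p) (by simp)
      (Or.inr (Or.inr ⟨p, q, hpq, hcontra⟩))
  refine ⟨?_, part2, ?_⟩
  · intro i
    obtain ⟨b, hb⟩ := hvar i
    exact ⟨b, hb, fun b' hb' => by rw [hb] at hb'; cases hb'; rfl⟩
  · intro p
    obtain ⟨q, hq⟩ := hlit p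
    refine ⟨q, ?_⟩
    obtain ⟨b, hb⟩ := hvar (C p q).1
    have hne := part2 p q hq
    simp only []
    rw [hb]
    cases b <;> cases hcp : (C p q).2 <;> simp_all
end

section
/- If a feasible (possibly fractional) solution x to the LP relaxation of an MWTM instance exists, then the number of effective leaves with respect to x is at least the number of tasks m. -/
attribute [local instance] Classical.propDecidable

/-- A rooted tree on a finite vertex type `V`, given by a parent function. -/
structure OrgTree (V : Type) [Fintype V] [DecidableEq V] where
  root : V
  parent : V → V
  parent_root : parent root = root
  reach : ∀ v : V, ∃ k : ℕ, parent^[k] v = root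

variable {V : Type} [Fintype V] [DecidableEq V]

/-- `T.Anc u v` : `u` is a (weak) ancestor of `v`, i.e. `u` lies on the
path from the root to `v`. -/
def OrgTree.Anc (T : OrgTree V) (u v : V) : Prop :=
  ∃ k : ℕ, T.parent^[k] v = u

/-- A leaf is a node with no children. -/
def OrgTree.IsLeaf (T : OrgTree V) (v : V) : Prop :=
  ∀ u : V, T.parent u = v → u = v

/-- An antichain: no element is a (weak) ancestor of another distinct element. -/
def OrgTree.IsAntichain (T : OrgTree V) (S : Set V) : Prop :=
  ∀ u ∈ S, ∀ v ∈ S, u ≠ v → ¬ T.Anc u v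

/-- Feasibility for the LP relaxation of the MWTM ILP:
nonnegativity, per-node sums at most 1, per-task sums equal to 1, and
for every leaf the total assignment along the root-to-leaf path at most 1. -/
def LPFeasible (T : OrgTree V) (m : ℕ) (x : V → Fin m → ℝ) : Prop :=
  (∀ i j, 0 ≤ x i j) ∧
  (∀ i : V, ∑ j : Fin m, x i j ≤ 1) ∧
  (∀ j : Fin m, ∑ i : V, x i j = 1) ∧
  (∀ k : V, T.IsLeaf k →
    ∑ i ∈ Finset.univ.filter (fun i => T.Anc i k), ∑ j : Fin m, x i j ≤ 1)

/-- An effective leaf w.r.t. `x`: a node with a positive assignment none of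
whose strict descendants has a positive assignment. -/
def EffLeaf (T : OrgTree V) (m : ℕ) (x : V → Fin m → ℝ) (i : V) : Prop :=
  (∃ j : Fin m, 0 < x i j) ∧
    ∀ v : V, T.Anc i v → v ≠ i → ∀ j : Fin m, x v j = 0

lemma anc_refl (T : OrgTree V) (v : V) : T.Anc v v := ⟨0, rfl⟩

lemma anc_trans (T : OrgTree V) {u v w : V} (h1 : T.Anc u v) (h2 : T.Anc v w) :
    T.Anc u w := by
  obtain ⟨a, ha⟩ := h1
  obtain ⟨b, hb⟩ := h2
  exact ⟨a + b, by rw [Function.iterate_add_apply, hb, ha]⟩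

noncomputable def depth (T : OrgTree V) (v : V) : ℕ := Nat.find (T.reach v)

lemma iterate_root (T : OrgTree V) (n : ℕ) : T.parent^[n] T.root = T.root := by
  induction n with
  | zero => rfl
  | succ n ih => rw [Function.iterate_succ_apply', ih, T.parent_root]

lemma depth_spec (T : OrgTree V) (v : V) : T.parent^[depth T v] v = T.root :=
  Nat.find_spec (T.reach v)

lemma depth_lt (T : OrgTree V) {v w : V} (h : T.Anc v w) (hne : w ≠ v) :
    depth T v < depth T w := by
  obtain ⟨k, hk⟩ := h
  have hk0 : k ≠ 0 := by rintro rfl; simp at hk; exact hne hk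
  by_cases hcase : k < depth T w
  · have hroot : T.parent^[depth T w - k] v = T.root := by
      rw [← hk, ← Function.iterate_add_apply]
      rw [Nat.sub_add_cancel hcase.le]
      exact depth_spec T w
    have : depth T v ≤ depth T w - k := Nat.find_min' (T.reach v) hroot
    omega
  · push_neg at hcase
    have hvroot : v = T.root := by
      rw [← hk, ← Nat.sub_add_cancel hcase, Function.iterate_add_apply,
        depth_spec T w, iterate_root]
    have hdv : depth T v = 0 := by
      have : depth T v ≤ 0 := Nat.find_min' (T.reach v) (by rw [hvroot]; rfl)
      omega
    have hdw : depth T w ≠ 0 := by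
      intro h0
      have := depth_spec T w
      rw [h0] at this
      exact hne (this.trans hvroot.symm)
    omega

/-- Every node has a leaf (weak) descendant. -/
lemma exists_leaf_desc (T : OrgTree V) (v : V) :
    ∃ k : V, T.IsLeaf k ∧ T.Anc v k := by
  classical
  set S : Finset V := Finset.univ.filter (fun w => T.Anc v w) with hS
  have hne : S.Nonempty := ⟨v, by simp [hS, anc_refl]⟩
  obtain ⟨k, hkS, hkmax⟩ := S.exists_max_image (depth T) hne
  have hkanc : T.Anc v k := by simpa [hS] using hkS
  refine ⟨k, ?_, hkanc⟩
  intro u hu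
  by_contra hne'
  have huS : u ∈ S := by
    simp only [hS, Finset.mem_filter, Finset.mem_univ, true_and]
    exact anc_trans T hkanc ⟨1, by simpa using hu⟩
  have := hkmax u huS
  have := depth_lt T (v := k) (w := u) ⟨1, by simpa using hu⟩ hne'
  omega

/-- Every node with a positive assignment has an effective-leaf descendant. -/
lemma exists_effLeaf_desc (T : OrgTree V) (m : ℕ) (x : V → Fin m → ℝ)
    (hx : LPFeasible T m x) (i : V) (hpos : ∃ j, 0 < x i j) :
    ∃ e : V, EffLeaf T m x e ∧ T.Anc i e := by
  classical
  set S : Finset V := Finset.univ.filter (fun w => T.Anc i w ∧ ∃ j, 0 < x w j) with hS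
  have hne : S.Nonempty := ⟨i, by simp [hS, anc_refl, hpos]⟩
  obtain ⟨e, heS, hemax⟩ := S.exists_max_image (depth T) hne
  simp only [hS, Finset.mem_filter, Finset.mem_univ, true_and] at heS
  refine ⟨e, ⟨heS.2, ?_⟩, heS.1⟩
  intro v hanc hvne j
  by_contra hne'
  have hvpos : 0 < x v j := lt_of_le_of_ne (hx.1 v j) (Ne.symm hne')
  have hvS : v ∈ S := by
    simp only [hS, Finset.mem_filter, Finset.mem_univ, true_and]
    exact ⟨anc_trans T heS.1 hanc, j, hvpos⟩
  have := hemax v hvS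
  have := depth_lt T hanc hvne
  omega

/-- If the LP relaxation of an MWTM instance has a feasible
(possibly fractional) solution `x`, then the number of effective leaves
w.r.t. `x` is at least the number `m` of tasks. -/
theorem effLeaves_ge_tasks (T : OrgTree V) (m : ℕ) (x : V → Fin m → ℝ)
    (hx : LPFeasible T m x) :
    m ≤ {i : V | EffLeaf T m x i}.ncard := by
  classical
  set t : V → ℝ := fun i => ∑ j : Fin m, x i j with ht
  set E : Finset V := Finset.univ.filter (EffLeaf T m x) with hE
  have hncard : {i : V | EffLeaf T m x i}.ncard = E.card := by
    rw [Set.ncard_eq_toFinset_card']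
    congr 1
    ext i
    simp [hE]
  have htnn : ∀ i, 0 ≤ t i := fun i => Finset.sum_nonneg fun j _ => hx.1 i j
  -- total mass is m
  have hmass : (m : ℝ) = ∑ i : V, t i := by
    have : ∑ i : V, t i = ∑ j : Fin m, ∑ i : V, x i j := Finset.sum_comm
    rw [this]
    simp [hx.2.2.1]
  -- per-effective-leaf path bound
  have hpath : ∀ e ∈ E, ∑ i ∈ Finset.univ.filter (fun i => T.Anc i e), t i ≤ 1 := by
    intro e heE
    simp only [hE, Finset.mem_filter] at heE
    obtain ⟨k, hkleaf, hkanc⟩ := exists_leaf_desc T e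
    have hsub : Finset.univ.filter (fun i => T.Anc i e) ⊆
        Finset.univ.filter (fun i => T.Anc i k) := by
      intro i hi
      simp only [Finset.mem_filter, Finset.mem_univ, true_and] at hi ⊢
      exact anc_trans T hi hkanc
    calc ∑ i ∈ Finset.univ.filter (fun i => T.Anc i e), t i
        ≤ ∑ i ∈ Finset.univ.filter (fun i => T.Anc i k), t i :=
          Finset.sum_le_sum_of_subset_of_nonneg hsub (fun i _ _ => htnn i)
      _ ≤ 1 := hx.2.2.2 k hkleaf
  -- key counting inequality
  have hkey : ∑ i : V, t i ≤ ∑ e ∈ E, ∑ i ∈ Finset.univ.filter (fun i => T.Anc i e), t i := by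
    have hswap : ∑ e ∈ E, ∑ i ∈ Finset.univ.filter (fun i => T.Anc i e), t i
        = ∑ i : V, ((E.filter (fun e => T.Anc i e)).card : ℝ) * t i := by
      calc ∑ e ∈ E, ∑ i ∈ Finset.univ.filter (fun i => T.Anc i e), t i
          = ∑ e ∈ E, ∑ i : V, (if T.Anc i e then t i else 0) := by
            refine Finset.sum_congr rfl fun e _ => ?_
            rw [Finset.sum_filter]
        _ = ∑ i : V, ∑ e ∈ E, (if T.Anc i e then t i else 0) := Finset.sum_comm
        _ = ∑ i : V, ((E.filter (fun e => T.Anc i e)).card : ℝ) * t i := by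
            refine Finset.sum_congr rfl fun i _ => ?_
            rw [← Finset.sum_filter, Finset.sum_const, nsmul_eq_mul]
    rw [hswap]
    refine Finset.sum_le_sum fun i _ => ?_
    rcases eq_or_lt_of_le (htnn i) with h0 | hpos
    · rw [← h0]; simp
    · have hposj : ∃ j, 0 < x i j := by
        by_contra hall
        push_neg at hall
        have : t i = 0 := le_antisymm
          (Finset.sum_nonpos fun j _ => hall j) (htnn i)
        exact absurd this (ne_of_gt hpos)
      obtain ⟨e, heff, hanc⟩ := exists_effLeaf_desc T m x hx i hposj
      have hcard : 1 ≤ (E.filter (fun e => T.Anc i e)).card := by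
        refine Finset.card_pos.mpr ⟨e, ?_⟩
        simp [hE, heff, hanc]
      have h1 : (1:ℝ) ≤ ((E.filter (fun e => T.Anc i e)).card : ℝ) := by exact_mod_cast hcard
      nlinarith [htnn i]
  have hfinal : (m : ℝ) ≤ (E.card : ℝ) := by
    calc (m : ℝ) = ∑ i : V, t i := hmass
      _ ≤ ∑ e ∈ E, ∑ i ∈ Finset.univ.filter (fun i => T.Anc i e), t i := hkey
      _ ≤ ∑ _e ∈ E, (1 : ℝ) := Finset.sum_le_sum hpath
      _ = E.card := by simp
  rw [hncard]
  exact_mod_cast hfinal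
end
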